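/- Let J(E₀,β₂*) denote the Jacobian J₀ of the model at the disease-free equilibrium with the parameter β₂ replaced by β₂* = ω(ω+ω₂+r₂)(μ+ω+α)/(B(μ+ω)+(1−σ)αB). Then det(τI − J(E₀,β₂*)) = τ·(τ+ω)(τ+ω+α+μ)(τ+(ω+ω₁+m+r₁)(1−R₀₁))(τ+ω+δ); consequently 0 is an eigenvalue of J(E₀,β₂*), it is a simple eigenvalue whenever R₀₁ ≠ 1, and if R₀₁ < 1 all remaining eigenvalues are negative reals. -/

import Mathlib

open Matrix Polynomial

private lemma charpoly_eval' {n : Type*} [DecidableEq n] [Fintype n] {R : Type*} [CommRing R]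
    (M : Matrix n n R) (t : R) :
    (M.charpoly).eval t = (t • (1 : Matrix n n R) - M).det := by
  rw [Matrix.charpoly, ← coe_evalRingHom, RingHom.map_det]
  congr 1
  ext i j
  by_cases h : i = j <;>
    simp [h, Matrix.charmatrix_apply, Matrix.one_apply, Matrix.diagonal_apply]

private lemma det5 {F : Type*} [Field F] (a b c d e f g h i j k l p q r s τ : F) :
    (τ • (1 : Matrix (Fin 5) (Fin 5) F) -
        !![a,b,c,d,e; f,g,h,i,j; 0,0,k,0,0; 0,0,l,p,0; 0,0,q,r,s]).det
      = ((τ-a)*(τ-g) - b*f) * ((τ-k)*(τ-p)*(τ-s)) := by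
  simp [Matrix.det_succ_column_zero, Fin.sum_univ_succ, Matrix.det_fin_three,
    Fin.succAbove, Matrix.vecHead, Matrix.vecTail,
    Matrix.one_apply]
  ring

set_option maxRecDepth 8000 in
/-- The Jacobian at the disease-free equilibrium with β₂ = β₂* has
characteristic polynomial τ(τ+ω)(τ+ω+α+μ)(τ+(ω+ω₁+m+r₁)(1−R₀₁))(τ+ω+δ):
0 is an eigenvalue, it is simple whenever R₀₁ ≠ 1, and if R₀₁ < 1
all remaining eigenvalues are negative reals. -/
theorem jacobian_beta2star_zero_eigenvalue
    (B ω β₁ α μ δ σ ω₁ ω₂ m r₁ r₂ : ℝ)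
    (hB : 0 < B) (hω : 0 < ω) (hβ₁ : 0 < β₁) (hα : 0 < α)
    (hμ : 0 < μ) (hδ : 0 < δ) (hσ : σ ∈ Set.Ioo (0 : ℝ) 1)
    (hω₁ : 0 < ω₁) (hω₂ : 0 < ω₂) (hm : 0 < m) (hr₁ : 0 < r₁) (hr₂ : 0 < r₂)
    (S₀ V₀ R₀₁ β₂star : ℝ)
    (hS₀ : S₀ = B * (μ + ω) / (ω * (μ + ω + α)))
    (hV₀ : V₀ = α * B / (ω * (μ + ω + α)))
    (hR₀₁ : R₀₁ = β₁ * (B * (μ + ω) + (1 - σ) * α * B) /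
      ((ω + ω₁ + m + r₁) * ω * (μ + ω + α)))
    (hβ₂star : β₂star = ω * (ω + ω₂ + r₂) * (μ + ω + α) /
      (B * (μ + ω) + (1 - σ) * α * B))
    (J : Matrix (Fin 5) (Fin 5) ℝ)
    (hJ : J =
      !![-ω - α, μ, -β₁ * S₀, -β₂star * S₀, δ;
         α, -ω - μ, -(1 - σ) * β₁ * V₀, -(1 - σ) * β₂star * V₀, 0;
         0, 0, -(ω + ω₁ + m + r₁) + β₁ * (S₀ + (1 - σ) * V₀), 0, 0;
         0, 0, m, -(ω + ω₂ + r₂) + β₂star * (S₀ + (1 - σ) * V₀), 0;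
         0, 0, r₁, r₂, -ω - δ]) :
    (∀ τ : ℝ,
      (τ • (1 : Matrix (Fin 5) (Fin 5) ℝ) - J).det =
        τ * ((τ + ω) * (τ + ω + α + μ) * (τ + (ω + ω₁ + m + r₁) * (1 - R₀₁)) *
          (τ + ω + δ))) ∧
    (0 : ℝ) ∈ spectrum ℝ J ∧
    (R₀₁ ≠ 1 → (Matrix.charpoly J).roots.count 0 = 1) ∧
    (R₀₁ < 1 → ∀ τ : ℂ, τ ∈ spectrum ℂ (J.map (Complex.ofReal ·)) → τ ≠ 0 →
      τ.im = 0 ∧ τ.re < 0) := by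
  obtain ⟨hσ0, hσ1⟩ := hσ
  have hK : ω * (μ + ω + α) ≠ 0 := by positivity
  have hDpos : 0 < B * (μ + ω) + (1 - σ) * α * B := by
    have h1 : 0 < 1 - σ := by linarith
    positivity
  have hD : B * (μ + ω) + (1 - σ) * α * B ≠ 0 := ne_of_gt hDpos
  have hk₁ : 0 < ω + ω₁ + m + r₁ := by positivity
  have e1 : β₁ * (S₀ + (1 - σ) * V₀) = (ω + ω₁ + m + r₁) * R₀₁ := by
    rw [hS₀, hV₀, hR₀₁]; field_simp
  have e2 : β₂star * (S₀ + (1 - σ) * V₀) = ω + ω₂ + r₂ := by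
    rw [hS₀, hV₀, hβ₂star]; field_simp
  set aa : ℝ := (ω + ω₁ + m + r₁) * (1 - R₀₁) with haa
  have hJ' : J =
      !![-ω - α, μ, -β₁ * S₀, -β₂star * S₀, δ;
         α, -ω - μ, -(1 - σ) * β₁ * V₀, -(1 - σ) * β₂star * V₀, 0;
         0, 0, -aa, 0, 0;
         0, 0, m, 0, 0;
         0, 0, r₁, r₂, -ω - δ] := by
    rw [hJ, e1, e2]
    congr 1 <;> try rfl
    have h3 : -(ω + ω₁ + m + r₁) + (ω + ω₁ + m + r₁) * R₀₁ = -aa := by rw [haa]; ring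
    have h4 : -(ω + ω₂ + r₂) + (ω + ω₂ + r₂) = (0:ℝ) := by ring
    rw [h3, h4]
  -- part 1
  have detR : ∀ τ : ℝ,
      (τ • (1 : Matrix (Fin 5) (Fin 5) ℝ) - J).det =
        τ * ((τ + ω) * (τ + ω + α + μ) * (τ + aa) * (τ + ω + δ)) := by
    intro τ
    rw [hJ', det5]
    ring
  have hP : J.charpoly =
      X * (X + C ω) * (X + C (ω + α + μ)) * (X + C aa) * (X + C (ω + δ)) := by
    apply Polynomial.funext
    intro x
    rw [charpoly_eval', detR x]
    simp
    ring
  refine ⟨detR, ?_, ?_, ?_⟩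
  -- part 2
  · rw [spectrum.mem_iff]
    intro hU
    rw [Matrix.isUnit_iff_isUnit_det] at hU
    have : (algebraMap ℝ (Matrix (Fin 5) (Fin 5) ℝ) 0 - J)
        = (0 : ℝ) • (1 : Matrix (Fin 5) (Fin 5) ℝ) - J := by
      rw [Algebra.algebraMap_eq_smul_one]
    rw [this, detR 0] at hU
    simp at hU
  -- parts 3 and 4 share the charpoly factorization
  · intro hR1
    have haane : aa ≠ 0 := by
      rw [haa]
      exact mul_ne_zero (ne_of_gt hk₁) (sub_ne_zero.mpr (Ne.symm hR1))
    have hXC : ∀ c : ℝ, (X + C c : ℝ[X]) ≠ 0 := fun c => (monic_X_add_C c).ne_zero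
    have hrm : ∀ c : ℝ, c ≠ 0 → rootMultiplicity 0 (X + C c : ℝ[X]) = 0 := by
      intro c hc
      rw [rootMultiplicity_eq_zero_iff ]
      intro h
      simp [IsRoot] at h
      exact absurd h hc
    rw [Polynomial.count_roots, hP]
    rw [rootMultiplicity_mul (mul_ne_zero (mul_ne_zero (mul_ne_zero
      (mul_ne_zero X_ne_zero (hXC ω)) (hXC _)) (hXC _)) (hXC _)),
      rootMultiplicity_mul (mul_ne_zero (mul_ne_zero
      (mul_ne_zero X_ne_zero (hXC ω)) (hXC _)) (hXC _)),
      rootMultiplicity_mul (mul_ne_zero (mul_ne_zero X_ne_zero (hXC ω)) (hXC _)),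
      rootMultiplicity_mul (mul_ne_zero X_ne_zero (hXC ω))]
    rw [hrm ω (ne_of_gt hω), hrm _ (by positivity), hrm _ haane,
      hrm _ (by positivity)]
    have : rootMultiplicity (0:ℝ) (X : ℝ[X]) = 1 := by
      have := Polynomial.rootMultiplicity_X_sub_C (x := (0:ℝ)) (y := (0:ℝ))
      simpa using this
    omega
  · intro hRlt τ hτ hτ0
    have haapos : 0 < aa := by
      rw [haa]
      exact mul_pos hk₁ (by linarith)
    rw [spectrum.mem_iff] at hτ
    have hdet : (τ • (1 : Matrix (Fin 5) (Fin 5) ℂ) - J.map (Complex.ofReal ·)).det = 0 := by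
      by_contra h
      exact hτ (by
        rw [Algebra.algebraMap_eq_smul_one]
        rw [Matrix.isUnit_iff_isUnit_det]
        exact isUnit_iff_ne_zero.mpr h)
    have hmap : J.map (Complex.ofReal ·) = J.map Complex.ofRealHom := rfl
    have hev : Polynomial.eval τ ((J.map (Complex.ofReal ·)).charpoly) = 0 := by
      rw [charpoly_eval', hdet]
    rw [hmap, Matrix.charpoly_map, hP] at hev
    simp only [Polynomial.map_mul, Polynomial.map_add, Polynomial.map_X, Polynomial.map_C,
      eval_mul, eval_add, eval_X, eval_C, Complex.ofRealHom_eq_coe] at hev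
    have hfac : τ * ((τ + ω) * ((τ + (ω + α + μ)) * ((τ + aa) * (τ + (ω + δ))))) = 0 := by
      rw [← hev]; push_cast; ring
    rcases mul_eq_zero.mp hfac with h | h
    · exact absurd h hτ0
    rcases mul_eq_zero.mp h with h | h
    · have : τ = -(ω : ℂ) := by linear_combination h
      rw [this]
      refine ⟨by simp, by simp; linarith⟩
    rcases mul_eq_zero.mp h with h | h
    · have : τ = -((ω + α + μ : ℝ) : ℂ) := by push_cast; linear_combination h
      rw [this]
      refine ⟨by simp, by simp; linarith⟩
    rcases mul_eq_zero.mp h with h | h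
    · have : τ = -((aa : ℝ) : ℂ) := by linear_combination h
      rw [this]
      refine ⟨by simp, by simp; linarith⟩
    · have : τ = -((ω + δ : ℝ) : ℂ) := by push_cast; linear_combination h
      rw [this]
      refine ⟨by simp, by simp; linarith⟩
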